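/- arXiv:1607.02834 — 4 statements merged into one kernel-verified Lean document; each statement's English description precedes it below -/
import Mathlib

section
/- Define h(α,γ) = ln(2γ)/α + (α/2)·γ·(1-γ) for α > 0 and γ ∈ [1/2, 1]. For fixed α > √2, h(α,·) attains its unique maximum on [1/2,1] at γ(α) = (1/2 + √(1/4 + 4/α²))/2, and for 0 < α ≤ √2 the maximum is attained at γ = 1. -/
noncomputable def h (α γ : ℝ) : ℝ := Real.log (2 * γ) / α + (α / 2) * γ * (1 - γ)

noncomputable def γopt (α : ℝ) : ℝ := (1 / 2 + Real.sqrt (1 / 4 + 4 / α ^ 2)) / 2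

lemma h_hasDerivAt (α γ : ℝ) (hα : α ≠ 0) (hγ : 0 < γ) :
    HasDerivAt (h α) (1/(α*γ) + α/2 - α*γ) γ := by
  have h1 : HasDerivAt (fun x : ℝ => Real.log (2*x)) (1/γ) γ := by
    have h0 : HasDerivAt (fun x : ℝ => 2*x) 2 γ := by
      simpa using (hasDerivAt_id γ).const_mul (2:ℝ)
    have := (Real.hasDerivAt_log (x := 2*γ) (by positivity)).comp γ h0
    refine this.congr_deriv ?_
    field_simp
  have h2 : HasDerivAt (fun x : ℝ => (α/2)*x*(1-x)) (α/2 - α*γ) γ := by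
    have := ((hasDerivAt_id γ).const_mul (α/2)).mul
      ((hasDerivAt_const γ (1:ℝ)).sub (hasDerivAt_id γ))
    refine this.congr_deriv ?_
    simp [id]
    ring
  have := (h1.div_const α).add h2
  refine this.congr_deriv ?_
  field_simp
  ring

lemma deriv_factor (α γ : ℝ) (hα : 0 < α) (hγ : γ ≠ 0) :
    1/(α*γ) + α/2 - α*γ = α * (γopt α - γ) * (γ + γopt α - 1/2) / γ := by
  have hs2 : Real.sqrt (1/4 + 4/α^2) ^ 2 = 1/4 + 4/α^2 := Real.sq_sqrt (by positivity)
  have hα' : α ≠ 0 := ne_of_gt hα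
  set s := Real.sqrt (1/4 + 4/α^2) with hsdef
  unfold γopt
  rw [← hsdef]
  have hs2' : α^2 * s^2 = α^2/4 + 4 := by rw [hs2]; field_simp
  field_simp
  linear_combination (-4) * hs2'

lemma gopt_gt (α : ℝ) (hα : 0 < α) : 1/2 < γopt α := by
  have hs2 : Real.sqrt (1/4 + 4/α^2) ^ 2 = 1/4 + 4/α^2 := Real.sq_sqrt (by positivity)
  have hs0 : 0 ≤ Real.sqrt (1/4 + 4/α^2) := Real.sqrt_nonneg _
  have h4 : 0 < 4/α^2 := by positivity
  unfold γopt
  nlinarith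

theorem stmt_10 (α : ℝ) :
    (Real.sqrt 2 < α →
      γopt α ∈ Set.Icc (1/2 : ℝ) 1 ∧
      (∀ γ ∈ Set.Icc (1/2 : ℝ) 1, h α γ ≤ h α (γopt α)) ∧
      (∀ γ ∈ Set.Icc (1/2 : ℝ) 1, γ ≠ γopt α → h α γ < h α (γopt α))) ∧
    (0 < α → α ≤ Real.sqrt 2 →
      ∀ γ ∈ Set.Icc (1/2 : ℝ) 1, h α γ ≤ h α 1) := by
  constructor
  · intro hα2
    have hα : 0 < α := lt_trans (Real.sqrt_pos.mpr two_pos) hα2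
    have hα' : α ≠ 0 := ne_of_gt hα
    have hsq2 : (Real.sqrt 2)^2 = 2 := Real.sq_sqrt (by norm_num)
    have hα2' : 2 < α^2 := by nlinarith [Real.sqrt_nonneg 2]
    have hs2 : Real.sqrt (1/4 + 4/α^2) ^ 2 = 1/4 + 4/α^2 := Real.sq_sqrt (by positivity)
    have hs0 : 0 ≤ Real.sqrt (1/4 + 4/α^2) := Real.sqrt_nonneg _
    have hdiv : 4/α^2 < 2 := by rw [div_lt_iff₀ (by positivity)]; nlinarith
    have hglt : γopt α < 1 := by unfold γopt; nlinarith
    have hggt : 1/2 < γopt α := gopt_gt α hα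
    set g := γopt α with hg
    have hmem : g ∈ Set.Icc (1/2 : ℝ) 1 := ⟨le_of_lt hggt, le_of_lt hglt⟩
    -- strict mono on [1/2, g]
    have hmono : StrictMonoOn (h α) (Set.Icc (1/2 : ℝ) g) := by
      apply strictMonoOn_of_deriv_pos (convex_Icc _ _)
      · intro x hx
        exact (h_hasDerivAt α x hα' (by linarith [hx.1])).continuousAt.continuousWithinAt
      · intro x hx
        rw [interior_Icc] at hx
        have hx0 : 0 < x := by linarith [hx.1]
        rw [(h_hasDerivAt α x hα' hx0).deriv, deriv_factor α x hα (ne_of_gt hx0)]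
        have h1 : 0 < g - x := by linarith [hx.2]
        have h2 : 0 < x + g - 1/2 := by linarith [hx.1]
        positivity
    have hanti : StrictAntiOn (h α) (Set.Icc g 1) := by
      apply strictAntiOn_of_deriv_neg (convex_Icc _ _)
      · intro x hx
        exact (h_hasDerivAt α x hα' (by linarith [hx.1])).continuousAt.continuousWithinAt
      · intro x hx
        rw [interior_Icc] at hx
        have hx0 : 0 < x := by linarith [hx.1]
        rw [(h_hasDerivAt α x hα' hx0).deriv, deriv_factor α x hα (ne_of_gt hx0)]
        have h1 : g - x < 0 := by linarith [hx.1]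
        have h2 : 0 < x + g - 1/2 := by linarith [hx.1]
        have : α * (g - x) * (x + g - 1/2) < 0 := by nlinarith [mul_pos hα h2]
        exact div_neg_of_neg_of_pos this hx0
    have hstrict : ∀ γ ∈ Set.Icc (1/2 : ℝ) 1, γ ≠ g → h α γ < h α g := by
      intro γ hγ hne
      rcases lt_or_gt_of_ne hne with hlt | hgt
      · exact hmono ⟨hγ.1, le_of_lt hlt⟩ ⟨le_of_lt hggt, le_refl g⟩ hlt
      · exact hanti ⟨le_refl g, le_of_lt hglt⟩ ⟨le_of_lt hgt, hγ.2⟩ hgt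
    refine ⟨hmem, ?_, hstrict⟩
    intro γ hγ
    by_cases hne : γ = g
    · rw [hne]
    · exact le_of_lt (hstrict γ hγ hne)
  · intro hα hα2
    have hα' : α ≠ 0 := ne_of_gt hα
    have hsq2 : (Real.sqrt 2)^2 = 2 := Real.sq_sqrt (by norm_num)
    have hα2' : α^2 ≤ 2 := by nlinarith [Real.sqrt_nonneg 2]
    have hs2 : Real.sqrt (1/4 + 4/α^2) ^ 2 = 1/4 + 4/α^2 := Real.sq_sqrt (by positivity)
    have hs0 : 0 ≤ Real.sqrt (1/4 + 4/α^2) := Real.sqrt_nonneg _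
    have hdiv : 2 ≤ 4/α^2 := by rw [le_div_iff₀ (by positivity)]; nlinarith
    have hgge : 1 ≤ γopt α := by unfold γopt; nlinarith
    have hmono : StrictMonoOn (h α) (Set.Icc (1/2 : ℝ) 1) := by
      apply strictMonoOn_of_deriv_pos (convex_Icc _ _)
      · intro x hx
        exact (h_hasDerivAt α x hα' (by linarith [hx.1])).continuousAt.continuousWithinAt
      · intro x hx
        rw [interior_Icc] at hx
        have hx0 : 0 < x := by linarith [hx.1]
        rw [(h_hasDerivAt α x hα' hx0).deriv, deriv_factor α x hα (ne_of_gt hx0)]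
        have h1 : 0 < γopt α - x := by linarith [hx.2]
        have h2 : 0 < x + γopt α - 1/2 := by linarith [hx.1]
        positivity
    intro γ hγ
    rcases eq_or_lt_of_le hγ.2 with heq | hlt
    · rw [heq]
    · exact le_of_lt (hmono hγ ⟨by norm_num, le_refl 1⟩ hlt)
end

section
/- The system of equations α² = 2·ln(2γ)/(γ(1-γ)) and α² = 1/(γ(γ-1/2)) in variables α > √2, γ ∈ (1/2,1) has a unique solution, and at this solution ln(2γ)/α + (α/2)γ(1-γ) ∈ (0.390, 0.392). -/
open Finset

lemma logA : Real.log (1537/1000 : ℝ) < 0.43 := by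
  have hx : |(537/1537 : ℝ)| < 1 := by rw [abs_of_nonneg (by norm_num)]; norm_num
  have z := Real.abs_log_sub_add_sum_range_le hx 8
  rw [abs_of_nonneg (by norm_num : (0:ℝ) ≤ 537/1537)] at z
  have h1 : (1 : ℝ) - 537/1537 = (1537/1000)⁻¹ := by norm_num
  rw [h1, Real.log_inv, abs_le] at z
  have := z.1
  simp only [Finset.sum_range_succ, Finset.sum_range_zero] at this
  norm_num at this ⊢
  linarith

lemma logB : (0.43 : ℝ) < Real.log (1538/1000 : ℝ) := by
  have hx : |(269/769 : ℝ)| < 1 := by rw [abs_of_nonneg (by norm_num)]; norm_num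
  have z := Real.abs_log_sub_add_sum_range_le hx 8
  rw [abs_of_nonneg (by norm_num : (0:ℝ) ≤ 269/769)] at z
  have h1 : (1 : ℝ) - 269/769 = (1538/1000)⁻¹ := by norm_num
  rw [h1, Real.log_inv, abs_le] at z
  have := z.2
  simp only [Finset.sum_range_succ, Finset.sum_range_zero] at this
  norm_num at this ⊢
  linarith

noncomputable def Ffun (g : ℝ) : ℝ := 2 * (g - 1/2) * Real.log (2 * g) - (1 - g)

lemma Fmono {x y : ℝ} (hx : 1/2 ≤ x) (hxy : x < y) : Ffun x < Ffun y := by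
  have hlx : 0 ≤ Real.log (2 * x) := Real.log_nonneg (by linarith)
  have hll : Real.log (2 * x) ≤ Real.log (2 * y) :=
    Real.log_le_log (by linarith) (by linarith)
  have h1 : 2 * (x - 1/2) * Real.log (2 * x) ≤ 2 * (y - 1/2) * Real.log (2 * y) :=
    mul_le_mul (by linarith) hll hlx (by linarith)
  unfold Ffun
  linarith

lemma FA : Ffun (1537/2000) < 0 := by
  have := logA
  unfold Ffun
  norm_num
  linarith [this]

lemma FB : 0 < Ffun (769/1000) := by
  have := logB
  unfold Ffun
  norm_num
  linarith [this]

set_option maxHeartbeats 2000000 in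
theorem stmt_12 :
    (∃! p : ℝ × ℝ, Real.sqrt 2 < p.1 ∧ p.2 ∈ Set.Ioo (1/2 : ℝ) 1 ∧
      p.1 ^ 2 = 2 * Real.log (2 * p.2) / (p.2 * (1 - p.2)) ∧
      p.1 ^ 2 = 1 / (p.2 * (p.2 - 1/2))) ∧
    (∀ p : ℝ × ℝ, Real.sqrt 2 < p.1 → p.2 ∈ Set.Ioo (1/2 : ℝ) 1 →
      p.1 ^ 2 = 2 * Real.log (2 * p.2) / (p.2 * (1 - p.2)) →
      p.1 ^ 2 = 1 / (p.2 * (p.2 - 1/2)) →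
      Real.log (2 * p.2) / p.1 + (p.1 / 2) * p.2 * (1 - p.2) ∈ Set.Ioo (0.390 : ℝ) 0.392) := by
  -- continuity of Ffun on the interval
  have hcont : ContinuousOn Ffun (Set.Icc (1537/2000 : ℝ) (769/1000)) := by
    apply ContinuousOn.sub
    · apply ContinuousOn.mul
      · fun_prop
      · apply ContinuousOn.log
        · fun_prop
        · intro x hx
          have := hx.1
          norm_num at this ⊢
          linarith
    · fun_prop
  have hab : (1537/2000 : ℝ) ≤ 769/1000 := by norm_num
  have hiv := intermediate_value_Icc hab hcont
  have h0mem : (0:ℝ) ∈ Set.Icc (Ffun (1537/2000)) (Ffun (769/1000)) :=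
    ⟨le_of_lt FA, le_of_lt FB⟩
  obtain ⟨γ0, hγ0mem, hFγ0⟩ := hiv h0mem
  have hγ0a : (1537/2000 : ℝ) ≤ γ0 := hγ0mem.1
  have hγ0b : γ0 ≤ 769/1000 := hγ0mem.2
  have hγ0half : (1/2 : ℝ) < γ0 := by linarith
  have hγ0one : γ0 < 1 := by linarith
  have hγ0pos : (0:ℝ) < γ0 := by linarith
  have hprodpos : 0 < γ0 * (γ0 - 1/2) := mul_pos hγ0pos (by linarith)
  set α0 := Real.sqrt (1 / (γ0 * (γ0 - 1/2))) with hα0def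
  have hα0sq : α0 ^ 2 = 1 / (γ0 * (γ0 - 1/2)) := Real.sq_sqrt (by positivity)
  have hα0pos : 0 < α0 := Real.sqrt_pos.mpr (by positivity)
  have hα0gt : Real.sqrt 2 < α0 := by
    rw [hα0def]
    apply Real.sqrt_lt_sqrt (by norm_num)
    rw [lt_div_iff₀ hprodpos]
    nlinarith [mul_pos (show (0:ℝ) < 2*γ0+1 by linarith) (show (0:ℝ) < 1 - γ0 by linarith)]
  -- key equation from Ffun γ0 = 0
  have hL0 : 2 * (γ0 - 1/2) * Real.log (2 * γ0) = 1 - γ0 := by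
    have := hFγ0
    unfold Ffun at this
    linarith
  have heq1 : α0 ^ 2 = 2 * Real.log (2 * γ0) / (γ0 * (1 - γ0)) := by
    rw [hα0sq]
    rw [div_eq_div_iff (mul_pos hγ0pos (by linarith : (0:ℝ) < γ0 - 1/2)).ne' (mul_pos hγ0pos (by linarith : (0:ℝ) < 1 - γ0)).ne']
    linear_combination (-γ0) * hL0
  -- uniqueness helper: any solution has Ffun p.2 = 0
  have key : ∀ p : ℝ × ℝ, Real.sqrt 2 < p.1 → p.2 ∈ Set.Ioo (1/2 : ℝ) 1 →
      p.1 ^ 2 = 2 * Real.log (2 * p.2) / (p.2 * (1 - p.2)) →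
      p.1 ^ 2 = 1 / (p.2 * (p.2 - 1/2)) → Ffun p.2 = 0 := by
    rintro ⟨α, γ⟩ hα ⟨hγ1, hγ2⟩ he1 he2
    simp only at *
    have hd1 : (0:ℝ) < γ * (1 - γ) := mul_pos (by linarith) (by linarith)
    have hd2 : (0:ℝ) < γ * (γ - 1/2) := mul_pos (by linarith) (by linarith)
    have h5 : 2 * Real.log (2 * γ) / (γ * (1 - γ)) = 1 / (γ * (γ - 1/2)) := by
      rw [← he1, ← he2]
    rw [div_eq_div_iff hd1.ne' hd2.ne'] at h5
    have h6 : γ * (2 * (γ - 1/2) * Real.log (2 * γ) - (1 - γ)) = 0 := by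
      linear_combination h5
    unfold Ffun
    rcases mul_eq_zero.mp h6 with h | h
    · exact absurd h (by linarith)
    · exact h
  -- any solution has γ in [a,b]
  have keyγ : ∀ γ : ℝ, 1/2 < γ → γ < 1 → Ffun γ = 0 →
      (1537/2000 : ℝ) ≤ γ ∧ γ ≤ 769/1000 := by
    intro γ h1 h2 hF
    constructor
    · by_contra h
      push_neg at h
      have := Fmono (le_of_lt h1) h
      rw [hF] at this
      exact absurd (this.trans FA) (lt_irrefl 0)
    · by_contra h
      push_neg at h
      have := Fmono (by norm_num : (1/2:ℝ) ≤ 769/1000) h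
      rw [hF] at this
      linarith [FB]
  constructor
  · refine ⟨(α0, γ0), ⟨hα0gt, ⟨hγ0half, hγ0one⟩, heq1, by simpa using hα0sq⟩, ?_⟩
    rintro ⟨α, γ⟩ ⟨hα, hγ, he1, he2⟩
    simp only at *
    have hFγ : Ffun γ = 0 := key (α, γ) hα hγ he1 he2
    have hγeq : γ = γ0 := by
      rcases lt_trichotomy γ γ0 with h | h | h
      · have := Fmono (le_of_lt hγ.1) h
        rw [hFγ, hFγ0] at this; linarith
      · exact h
      · have := Fmono (le_of_lt hγ0half) h
        rw [hFγ, hFγ0] at this; linarith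
    have hαeq : α = α0 := by
      have hsq2 : (0:ℝ) < Real.sqrt 2 := Real.sqrt_pos.mpr (by norm_num)
      have hαpos : 0 < α := lt_trans hsq2 hα
      have : α ^ 2 = α0 ^ 2 := by rw [he2, hγeq, hα0sq]
      calc α = Real.sqrt (α ^ 2) := (Real.sqrt_sq hαpos.le).symm
        _ = Real.sqrt (α0 ^ 2) := by rw [this]
        _ = α0 := Real.sqrt_sq hα0pos.le
    exact Prod.ext hαeq hγeq
  · rintro ⟨α, γ⟩ hα ⟨hγ1, hγ2⟩ he1 he2
    simp only at *
    have hFγ : Ffun γ = 0 := key (α, γ) hα ⟨hγ1, hγ2⟩ he1 he2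
    obtain ⟨hga, hgb⟩ := keyγ γ hγ1 hγ2 hFγ
    have hsq2 : (0:ℝ) < Real.sqrt 2 := Real.sqrt_pos.mpr (by norm_num)
    have hαpos : 0 < α := lt_trans hsq2 hα
    set L := Real.log (2 * γ) with hLdef
    have hLpos : 0 < L := Real.log_pos (by linarith)
    have hL : 2 * (γ - 1/2) * L = 1 - γ := by
      rw [hLdef]
      have h := hFγ
      unfold Ffun at h
      linarith
    have hd1 : (0:ℝ) < γ * (1 - γ) := mul_pos (by linarith) (by linarith)
    have hd2 : (0:ℝ) < γ * (γ - 1/2) := mul_pos (by linarith) (by linarith)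
    have hE : α ^ 2 * (γ * (1 - γ)) = 2 * L := by
      rw [he1]; exact div_mul_cancel₀ _ hd1.ne'
    have hα2 : α ^ 2 * (γ * (γ - 1/2)) = 1 := by
      rw [he2]; exact div_mul_cancel₀ _ hd2.ne'
    set V := L / α + α / 2 * γ * (1 - γ) with hVdef
    have hV : V = 2 * L / α := by
      have h2 : α / 2 * γ * (1 - γ) = L / α := by
        rw [eq_div_iff hαpos.ne']
        linear_combination hE / 2
      rw [hVdef, h2]
      ring
    have hVpos : 0 < V := by rw [hV]; positivity
    have h1 : V ^ 2 * α ^ 2 = 4 * L ^ 2 := by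
      rw [hV]; field_simp; ring
    have hVsq : V ^ 2 * (γ - 1/2) = γ * (1 - γ) ^ 2 := by
      linear_combination γ*(γ-1/2)^2*h1 - V^2*(γ-1/2)*hα2 + γ*(2*(γ-1/2)*L + (1-γ))*hL
    have hub : γ * (1 - γ) ^ 2 < 0.153664 * (γ - 1/2) := by
      nlinarith [mul_nonneg (sub_nonneg.mpr hga) (sub_nonneg.mpr hgb)]
    have hlb : (0.1521 : ℝ) * (γ - 1/2) < γ * (1 - γ) ^ 2 := by
      nlinarith [mul_nonneg (sub_nonneg.mpr hga) (sub_nonneg.mpr hgb)]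
    have hgd : (0:ℝ) < γ - 1/2 := by linarith
    have hVlb : (0.1521 : ℝ) < V ^ 2 := by
      have h : (0.1521 : ℝ) * (γ - 1/2) < V ^ 2 * (γ - 1/2) := by linarith
      exact lt_of_mul_lt_mul_right h hgd.le
    have hVub : V ^ 2 < (0.153664 : ℝ) := by
      have h : V ^ 2 * (γ - 1/2) < (0.153664 : ℝ) * (γ - 1/2) := by linarith
      exact lt_of_mul_lt_mul_right h hgd.le
    constructor
    · by_contra hc
      push_neg at hc
      have := pow_le_pow_left₀ hVpos.le hc 2
      norm_num at this
      linarith [hVlb]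
    · by_contra hc
      push_neg at hc
      have := pow_le_pow_left₀ (by norm_num : (0:ℝ) ≤ 0.392) hc 2
      norm_num at this
      linarith [hVub]
end

section
/- For all α > √2, letting γ(α) = (1/2 + √(1/4+4/α²))/2, we have h(α, γ(α)) ≥ 0.390, where h(α,γ) = ln(2γ)/α + (α/2)γ(1-γ); moreover for 0 < α ≤ √2, h(α,1) = ln(2)/α ≥ ln(2)/√2 > 0.390. -/
-- numeric bound on exp
lemma exp_bound_num : Real.exp 0.4297 ≤ 1.54 := by
  have hc : (0:ℝ) < 1 - 0.4297/64 := by norm_num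
  have h1 : Real.exp (0.4297/64) ≤ (1 - 0.4297/64)⁻¹ := by
    rw [le_inv_comm₀ (Real.exp_pos _) hc, ← Real.exp_neg]
    have := Real.add_one_le_exp (-(0.4297/64 : ℝ))
    linarith
  have h2 : Real.exp 0.4297 = (Real.exp (0.4297/64))^(64:ℕ) := by
    rw [← Real.exp_nat_mul]; norm_num
  rw [h2]
  calc (Real.exp (0.4297/64))^(64:ℕ) ≤ ((1 - 0.4297/64)⁻¹)^(64:ℕ) :=
        pow_le_pow_left₀ (Real.exp_pos _).le h1 64
    _ ≤ 1.54 := by norm_num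

lemma log_num : (0.4297:ℝ) ≤ Real.log 1.54 := by
  rw [Real.le_log_iff_exp_le (by norm_num)]
  exact exp_bound_num

theorem stmt_13 :
    (∀ α : ℝ, Real.sqrt 2 < α → h α (γopt α) ≥ 0.390) ∧
    (∀ α : ℝ, 0 < α → α ≤ Real.sqrt 2 →
      h α 1 = Real.log 2 / α ∧ Real.log 2 / α ≥ Real.log 2 / Real.sqrt 2 ∧
      Real.log 2 / Real.sqrt 2 > 0.390) := by
  constructor
  · intro α hα
    have hα0 : 0 < α := lt_trans (Real.sqrt_pos.mpr two_pos) hα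
    set s := Real.sqrt (1/4 + 4/α^2) with hs
    have hsq : s^2 = 1/4 + 4/α^2 := by
      rw [hs]; exact Real.sq_sqrt (show (0:ℝ) ≤ 1/4 + 4/α^2 by positivity)
    have hs0 : (1/2:ℝ) ≤ s := by
      rw [hs, show (1/2:ℝ) = Real.sqrt (1/4) by
        rw [show (1/4:ℝ) = (1/2)^2 by norm_num, Real.sqrt_sq (by norm_num)]]
      refine Real.sqrt_le_sqrt ?_
      have h4 : (0:ℝ) < 4/α^2 := by positivity
      linarith
    set γ := γopt α with hγdef
    have hγeq : γ = (1/2 + s)/2 := by rw [hγdef]; rfl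
    have hγhalf : (1/2:ℝ) ≤ γ := by rw [hγeq]; linarith
    have hγ0 : (0:ℝ) < γ := by linarith
    have hid : α^2 * (2*γ^2 - γ) = 2 := by
      have h1 : 2*((1/2+s)/2)^2 - (1/2+s)/2 = 2/α^2 := by
        linear_combination (1/2) * hsq
      rw [hγeq, h1]
      field_simp
    -- log split
    have hsplit : Real.log (2*γ) = Real.log 1.54 + Real.log (γ/0.77) := by
      rw [← Real.log_mul (by norm_num) (by positivity)]
      congr 1
      ring
    have hlg : 1 - 0.77/γ ≤ Real.log (γ/0.77) := by
      have h := Real.log_le_sub_one_of_pos (show (0:ℝ) < 0.77/γ by positivity)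
      have hinv : Real.log (0.77/γ) = - Real.log (γ/0.77) := by
        rw [← Real.log_inv, inv_div]
      linarith [hinv ▸ h]
    -- invert 1/γ using hid
    have hinvγ : 0.77/γ = 0.77 * (α^2*(2*γ-1)/2) := by
      rw [div_eq_iff hγ0.ne']
      linear_combination -0.385 * hid
    have claim : Real.log (2*γ) + α^2/2 * (γ*(1-γ)) ≥ 0.39 * α := by
      have hL : Real.log (2*γ) ≥ 0.4297 + (1 - 0.77/γ) := by
        rw [hsplit]; linarith [log_num]
      rw [hinvγ] at hL
      nlinarith [sq_nonneg (α*(γ - 0.77)), sq_nonneg (0.1771*α - 0.39)]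
    have hrw : h α γ = (Real.log (2*γ) + α^2/2 * (γ*(1-γ)))/α := by
      unfold h
      field_simp
    rw [hrw, ge_iff_le, le_div_iff₀ hα0]
    linarith [claim]
  · intro α hα0 hα
    refine ⟨?_, ?_, ?_⟩
    · unfold h; norm_num
    · have h2 : (0:ℝ) ≤ Real.log 2 := Real.log_nonneg one_le_two
      gcongr
    · have s2 : Real.sqrt 2 < 1.415 :=
        (Real.sqrt_lt' (by norm_num)).mpr (by norm_num)
      have l2 : (0.6931471803:ℝ) < Real.log 2 := Real.log_two_gt_d9
      have sp : (0:ℝ) < Real.sqrt 2 := Real.sqrt_pos.mpr two_pos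
      rw [gt_iff_lt, lt_div_iff₀ sp]
      nlinarith
end

section
/- For every p ∈ (0,1], ∫₀¹ √(p(1-x) + 1-p) dx = (2/(3p))·(1 − (1-p)^{3/2}), and hence (2/(3√p))·(1 − (1-p)^{3/2}) is the corresponding regret coefficient; its maximum over p ∈ (0,1] exceeds 0.68 and is attained near p ≈ 0.866. -/
set_option maxHeartbeats 1000000

theorem stmt_15 :
    (∀ p : ℝ, p ∈ Set.Ioc (0:ℝ) 1 →
      ∫ x in (0:ℝ)..1, Real.sqrt (p * (1 - x) + 1 - p) =
        (2 / (3 * p)) * (1 - (1 - p) ^ ((3:ℝ)/2))) ∧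
    (∃ p₀ ∈ Set.Ioc (0:ℝ) 1,
      (∀ q ∈ Set.Ioc (0:ℝ) 1,
        (2 / (3 * Real.sqrt q)) * (1 - (1 - q) ^ ((3:ℝ)/2)) ≤
          (2 / (3 * Real.sqrt p₀)) * (1 - (1 - p₀) ^ ((3:ℝ)/2))) ∧
      (2 / (3 * Real.sqrt p₀)) * (1 - (1 - p₀) ^ ((3:ℝ)/2)) > 0.68 ∧
      |p₀ - 0.866| < 0.01) := by
  constructor
  · intro p hp
    obtain ⟨hp0, hp1⟩ := hp
    have hInt : IntervalIntegrable (fun x => Real.sqrt (p * (1 - x) + 1 - p))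
        MeasureTheory.volume 0 1 :=
      (Real.continuous_sqrt.comp (by continuity)).intervalIntegrable 0 1
    have key : ∀ x ∈ Set.uIcc (0:ℝ) 1,
        HasDerivAt (fun x => -(2/(3*p)) * (p*(1-x)+1-p) ^ ((3:ℝ)/2))
          (Real.sqrt (p * (1 - x) + 1 - p)) x := by
      intro x hx
      rw [Set.uIcc_of_le (by norm_num : (0:ℝ) ≤ 1)] at hx
      have hin : 0 ≤ p*(1-x)+1-p := by nlinarith [hx.1, hx.2]
      have hg : HasDerivAt (fun x : ℝ => p*(1-x)+1-p) (p * (0 - 1)) x :=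
        (((((hasDerivAt_const x (1:ℝ)).sub (hasDerivAt_id' x)).const_mul p).add_const 1).sub_const p)
      have hrp : HasDerivAt (fun y : ℝ => y ^ ((3:ℝ)/2))
          ((3:ℝ)/2 * (p*(1-x)+1-p) ^ ((3:ℝ)/2 - 1)) (p*(1-x)+1-p) :=
        Real.hasDerivAt_rpow_const (Or.inr (by norm_num))
      have hcomp := (hrp.comp x hg).const_mul (-(2/(3*p)))
      convert hcomp using 1
      iterate 3 rfl
      rw [show (3:ℝ)/2 - 1 = 1/2 by norm_num, ← Real.sqrt_eq_rpow]
      field_simp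
      ring
    rw [intervalIntegral.integral_eq_sub_of_hasDerivAt key hInt]
    rw [show p*(1-(1:ℝ))+1-p = 1-p by ring, show p*(1-(0:ℝ))+1-p = (1:ℝ) by ring,
      Real.one_rpow]
    ring
  · have hr : Real.sqrt 3 ^ 2 = 3 := Real.sq_sqrt (by norm_num)
    set r := Real.sqrt 3 with hrdef
    have hrnn : 0 ≤ r := Real.sqrt_nonneg 3
    have hr1 : 1.73 < r := by nlinarith
    have hr2 : r < 1.7330 := by nlinarith
    have haux : ∀ t : ℝ, 0 ≤ t → t ^ ((3:ℝ)/2) = Real.sqrt t ^ 3 := by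
      intro t ht
      rw [Real.sqrt_eq_rpow, ← Real.rpow_natCast (t ^ ((1:ℝ)/2)) 3, ← Real.rpow_mul ht]
      norm_num
    have hu₀ : Real.sqrt (1 - r/2) = (r-1)/2 := by
      rw [show 1 - r/2 = ((r-1)/2)^2 by linear_combination (-1/4 : ℝ) * hr]
      exact Real.sqrt_sq (by nlinarith)
    have hs₀sq : Real.sqrt (r/2) ^ 2 = r/2 := Real.sq_sqrt (by nlinarith)
    have hs₀pos : 0 < Real.sqrt (r/2) := Real.sqrt_pos.mpr (by nlinarith)
    set s₀ := Real.sqrt (r/2) with hs₀def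
    have h3 : 1 - ((r-1)/2)^3 = 3/2 * (1 - (r-1)/2) := by
      linear_combination ((3:ℝ)/8 + (-1/8:ℝ)*r) * hr
    have hfp : 2 / (3 * s₀) * (1 - (1 - r/2) ^ ((3:ℝ)/2)) = (1 - (r-1)/2) / s₀ := by
      rw [haux _ (by nlinarith), hu₀, h3]
      field_simp
    refine ⟨r/2, ⟨by nlinarith, by nlinarith⟩, ?_, ?_, ?_⟩
    · intro q hq
      obtain ⟨hq0, hq1⟩ := hq
      set s := Real.sqrt q with hsdef
      set u := Real.sqrt (1-q) with hudef
      have hs : s^2 = q := Real.sq_sqrt hq0.le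
      have hspos : 0 < s := Real.sqrt_pos.mpr hq0
      have hu0 : 0 ≤ u := Real.sqrt_nonneg _
      have hu2 : u^2 = 1 - q := Real.sq_sqrt (by linarith)
      have hu1 : u ≤ 1 := by nlinarith
      rw [haux _ (by linarith), haux _ (by nlinarith), hu₀, ← hudef, ← hs₀def]
      have hu03 : (0:ℝ) ≤ 1 - ((r-1)/2)^3 := by nlinarith
      have hu3 : (0:ℝ) ≤ 1 - u^3 := by
        have := pow_le_one₀ hu0 hu1 (n := 3); linarith
      have hCpos : (0:ℝ) ≤ (15-8*r)+(-3+6*r)*u+6*u^2+2*r*u^3 := by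
        have t2 : 0 ≤ (-3+6*r)*u := mul_nonneg (by linarith) hu0
        have t4 : 0 ≤ 2*r*u^3 := by positivity
        nlinarith [sq_nonneg u]
      have hid : 9*(1-(r-1)/2)^2*(1-u^2) - 2*r*(1-u^3)^2
          = (u-(r-1)/2)^2*((1-u)*((15-8*r)+(-3+6*r)*u+6*u^2+2*r*u^3)) := by
        linear_combination ((-11/2:ℝ) + (7/2:ℝ)*u + (13/2:ℝ)*u^2 + (-7/2:ℝ)*u^3 + (1:ℝ)*u^4 + (-2:ℝ)*u^5 + (2:ℝ)*r + (-7/2:ℝ)*r*u + (3/2:ℝ)*r*u^2 + (-1/2:ℝ)*r*u^3 + (1/2:ℝ)*r*u^4) * hr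
      have hpoly : 2*r*(1-u^3)^2 ≤ 9*(1-(r-1)/2)^2*(1-u^2) := by
        have hP : (0:ℝ) ≤ (u-(r-1)/2)^2*((1-u)*((15-8*r)+(-3+6*r)*u+6*u^2+2*r*u^3)) :=
          mul_nonneg (sq_nonneg _) (mul_nonneg (by linarith) hCpos)
        linarith [hid, hP]
      have e2 : (2/3*(1-((r-1)/2)^3))^2 = (1-(r-1)/2)^2 := by
        linear_combination ((9/16:ℝ) + (-3/8:ℝ)*r + (1/8:ℝ)*r^2 + (-1/24:ℝ)*r^3 + (1/144:ℝ)*r^4) * hr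
      have hsq : (2/3*(1-u^3)*s₀)^2 ≤ (2/3*(1-((r-1)/2)^3)*s)^2 := by
        have expand1 : (2/3*(1-u^3)*s₀)^2 = (2/3*(1-u^3))^2 * (r/2) := by
          rw [mul_pow, hs₀sq]
        have expand2 : (2/3*(1-((r-1)/2)^3)*s)^2 = (1-(r-1)/2)^2 * (1-u^2) := by
          rw [mul_pow, e2, hs, show q = 1 - u^2 by linarith [hu2]]
        rw [expand1, expand2]
        linarith [hpoly]
      have hfin : 2/3*(1-u^3)*s₀ ≤ 2/3*(1-((r-1)/2)^3)*s := by
        have h1 := Real.sqrt_le_sqrt hsq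
        rwa [Real.sqrt_sq (by positivity), Real.sqrt_sq (by positivity)] at h1
      rw [div_mul_eq_mul_div, div_mul_eq_mul_div, div_le_div_iff₀ (by positivity) (by positivity)]
      nlinarith [hfin]
    · rw [hfp]
      rw [gt_iff_lt, lt_div_iff₀ hs₀pos]
      have h2 : (0.68*s₀)^2 < ((3-r)/2)^2 := by
        have : 1.7312 * r < 3 := by nlinarith
        calc (0.68*s₀)^2 = 0.2312 * r := by rw [mul_pow, hs₀sq]; ring
        _ < 3 - 1.5 * r := by linarith
        _ = ((3-r)/2)^2 := by linear_combination (-1/4:ℝ) * hr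
      nlinarith [h2, hs₀pos, hr2]
    · rw [abs_lt]
      constructor <;> nlinarith
end
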